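/- Let k be an odd positive natural number, let β_u, β_v ∈ ℝ ∖ {0} with β_v² ≤ β_u², and let ω_u, ω_v ∈ [0, 2π/k) with ω_u ≠ ω_v. Let G : ℝ → ℝ be a continuous function with G(ζ + π) = G(ζ) for every ζ ∈ ℝ, G(π/2) > 0, and such that G(π/2) > G(ζ) for every ζ ∈ [0, π] ∖ {π/2}. Define C_u(α) := 2β_u² · G((k/2)(α − ω_u)) and C_v(α) := 2β_v² · G((k/2)(α − ω_v)). Then there exists an interval I ⊂ ℝ with length 0 < |I| < 2π/k such that C_u(α) ≠ C_v(α) for every α ∈ I + (2π/k)ℤ. -/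

import Mathlib

open Real

/-- Abstract version of Theorem 4.3(ii): for odd `k`, nonzero `β_u, β_v` with
`β_v² ≤ β_u²`, distinct phases `ω_u ≠ ω_v` in `[0, 2π/k)`, and a continuous `π`-periodic
function `G` attaining at `π/2` its strict maximum over a period, the functions
`C_u(α) = 2β_u² G((k/2)(α − ω_u))` and `C_v(α) = 2β_v² G((k/2)(α − ω_v))` differ on all
`(2π/k)`-translates of some interval of positive length `< 2π/k`. -/
theorem stmt5 (k : ℕ) (hk : Odd k) (hk0 : 0 < k)
    (βu βv ωu ωv : ℝ) (hβu : βu ≠ 0) (hβv : βv ≠ 0) (hββ : βv ^ 2 ≤ βu ^ 2)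
    (hωu : ωu ∈ Set.Ico 0 (2 * π / (k : ℝ))) (hωv : ωv ∈ Set.Ico 0 (2 * π / (k : ℝ)))
    (hωuv : ωu ≠ ωv)
    (G : ℝ → ℝ) (hG : Continuous G) (hper : ∀ ζ : ℝ, G (ζ + π) = G ζ)
    (hGhalf : 0 < G (π / 2))
    (hmax : ∀ ζ ∈ Set.Icc 0 π, ζ ≠ π / 2 → G ζ < G (π / 2))
    (Cu Cv : ℝ → ℝ)
    (hCu : ∀ α : ℝ, Cu α = 2 * βu ^ 2 * G (((k : ℝ) / 2) * (α - ωu)))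
    (hCv : ∀ α : ℝ, Cv α = 2 * βv ^ 2 * G (((k : ℝ) / 2) * (α - ωv))) :
    ∃ a b : ℝ, a < b ∧ b - a < 2 * π / (k : ℝ) ∧
      ∀ α ∈ Set.Ioo a b, ∀ n : ℤ,
        Cu (α + n * (2 * π / (k : ℝ))) ≠ Cv (α + n * (2 * π / (k : ℝ))) := by
  have hkR : (0 : ℝ) < (k : ℝ) := by exact_mod_cast hk0
  have hkne : (k : ℝ) ≠ 0 := ne_of_gt hkR
  have hP : Function.Periodic G π := hper
  -- full ℤ-periodicity
  have hPer : ∀ (x : ℝ) (n : ℤ), G (x + n * π) = G x := fun x n => hP.int_mul n x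
  -- reduction: if ζ - π/2 is not an integer multiple of π, then G ζ < G (π/2)
  have hred : ∀ ζ : ℝ, (¬ ∃ m : ℤ, ζ - π / 2 = m * π) → G ζ < G (π / 2) := by
    intro ζ hζ
    set m : ℤ := ⌊ζ / π⌋ with hm
    have hζ' : G (ζ - m * π) = G ζ := hP.sub_int_mul_eq m
    have hπ : (0:ℝ) < π := pi_pos
    have h1 : (m : ℝ) ≤ ζ / π := Int.floor_le _
    have h2 : ζ / π < m + 1 := Int.lt_floor_add_one _
    have hlo : 0 ≤ ζ - m * π := by
      have := mul_le_mul_of_nonneg_right h1 hπ.le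
      rw [div_mul_cancel₀ _ hπ.ne'] at this
      linarith
    have hhi : ζ - m * π < π := by
      have := mul_lt_mul_of_pos_right h2 hπ
      rw [div_mul_cancel₀ _ hπ.ne'] at this
      nlinarith
    have hne : ζ - m * π ≠ π / 2 := by
      intro h
      exact hζ ⟨m, by linarith⟩
    have := hmax (ζ - m * π) ⟨hlo, hhi.le⟩ hne
    linarith [hζ'.symm ▸ this]
  -- the special point
  set α₀ : ℝ := ωu + π / (k : ℝ) with hα₀
  have hargu : ((k : ℝ) / 2) * (α₀ - ωu) = π / 2 := by
    field_simp [hα₀]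
    have hkk : (k : ℝ) * (π / (k : ℝ)) = π := by field_simp
    linear_combination (k : ℝ) * hα₀ + hkk
  set ζ₀ : ℝ := ((k : ℝ) / 2) * (α₀ - ωv) with hζ₀
  have hζ₀lt : G ζ₀ < G (π / 2) := by
    apply hred
    rintro ⟨m, hm⟩
    have heq : ωu - ωv = m * (2 * π / (k : ℝ)) := by
      have hπ : (0:ℝ) < π := pi_pos
      field_simp [hζ₀, hα₀] at hm ⊢
      nlinarith [hm]
    have habs : |ωu - ωv| < 2 * π / (k : ℝ) := by
      rw [abs_lt]
      constructor <;> [linarith [hωu.1, hωv.2]; linarith [hωu.2, hωv.1]]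
    have hpos : (0:ℝ) < 2 * π / (k : ℝ) := by positivity
    have hm0 : m = 0 := by
      by_contra hm0
      have h1le : (1:ℝ) ≤ |(m:ℝ)| := by exact_mod_cast Int.one_le_abs (by exact_mod_cast hm0)
      rw [heq, abs_mul, abs_of_pos hpos] at habs
      nlinarith
    rw [hm0] at heq
    simp at heq
    exact hωuv (by linarith)
  -- strict inequality at α₀
  have hflt : Cv α₀ < Cu α₀ := by
    rw [hCu, hCv, hargu, ← hζ₀]
    have hβu2 : (0:ℝ) < βu ^ 2 := by positivity
    have hβv2 : (0:ℝ) < βv ^ 2 := by positivity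
    rcases le_or_gt (G ζ₀) 0 with h | h
    · nlinarith
    · nlinarith
  -- continuity neighborhood
  have hcont : Continuous fun α => 2 * βu ^ 2 * G (((k : ℝ) / 2) * (α - ωu)) -
      2 * βv ^ 2 * G (((k : ℝ) / 2) * (α - ωv)) := by
    fun_prop
  have hopen : IsOpen {α : ℝ | 0 < 2 * βu ^ 2 * G (((k : ℝ) / 2) * (α - ωu)) -
      2 * βv ^ 2 * G (((k : ℝ) / 2) * (α - ωv))} :=
    isOpen_lt continuous_const hcont
  have hα₀mem : α₀ ∈ {α : ℝ | 0 < 2 * βu ^ 2 * G (((k : ℝ) / 2) * (α - ωu)) -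
      2 * βv ^ 2 * G (((k : ℝ) / 2) * (α - ωv))} := by
    have := hflt
    rw [hCu, hCv] at this
    simpa using sub_pos.mpr this
  obtain ⟨ε, hε, hball⟩ := Metric.isOpen_iff.mp hopen α₀ hα₀mem
  clear_value ζ₀ α₀
  obtain ⟨δ, hδpos, hδε, hδπ⟩ : ∃ δ : ℝ, 0 < δ ∧ δ ≤ ε ∧ δ ≤ π / (k : ℝ) :=
    ⟨min ε (π / (k : ℝ)), lt_min hε (by positivity), min_le_left _ _, min_le_right _ _⟩
  refine ⟨α₀ - δ / 2, α₀ + δ / 2, by linarith, ?_, ?_⟩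
  · have : α₀ + δ / 2 - (α₀ - δ / 2) = δ := by ring
    rw [this]
    calc δ ≤ π / (k : ℝ) := hδπ
      _ < 2 * π / (k : ℝ) := by
        rw [div_lt_div_iff₀ hkR hkR]
        nlinarith [mul_pos pi_pos hkR]
  · intro α hα n
    -- periodicity of Cu, Cv in steps of 2π/k
    have hshift : ∀ ω : ℝ, ((k : ℝ) / 2) * (α + n * (2 * π / (k : ℝ)) - ω)
        = ((k : ℝ) / 2) * (α - ω) + n * π := by
      intro ω; field_simp; ring
    have hCuα : Cu (α + n * (2 * π / (k : ℝ))) = Cu α := by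
      rw [hCu, hCu, hshift, hPer]
    have hCvα : Cv (α + n * (2 * π / (k : ℝ))) = Cv α := by
      rw [hCv, hCv, hshift, hPer]
    rw [hCuα, hCvα]
    have hmem : α ∈ Metric.ball α₀ ε := by
      rw [Metric.mem_ball, Real.dist_eq, abs_lt]
      obtain ⟨h1, h2⟩ := hα
      constructor <;> linarith
    have := hball hmem
    rw [hCu, hCv]
    intro h
    rw [Set.mem_setOf_eq] at this
    linarith [h ▸ this]
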